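/- arXiv:2310.19129 — 7 statements merged into one kernel-verified Lean document; each statement's English description precedes it below -/
import Mathlib

section
/- Let (X,d) be a compact metric space, A a closed subset of X, and ∼ the equivalence relation collapsing A to a point. Then the topology on X/∼ induced by the metric D_A (defined by D_A([x],[y]) = 0 if x,y ∈ A; d(x,A) if x ∉ A, y ∈ A; d(A,y) if x ∈ A, y ∉ A; min{d(x,y), d(x,A)+d(A,y)} otherwise) coincides with the quotient topology on X/∼ induced by the quotient map q : X → X/∼. -/
open Metric

/-- The equivalence relation collapsing `A` to a point. -/
def collapseRel {X : Type*} (A : Set X) (x y : X) : Prop :=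
  x = y ∨ (x ∈ A ∧ y ∈ A)

/-- The function `D_A` on `X` induced by collapsing a closed set `A` to a point. -/
noncomputable def DA {X : Type*} [MetricSpace X] (A : Set X) (x y : X) : ℝ := by
  classical
  exact if x ∈ A then (if y ∈ A then 0 else infDist y A)
    else (if y ∈ A then infDist x A else min (dist x y) (infDist x A + infDist y A))

lemma DA_le_dist {X : Type*} [MetricSpace X] (A : Set X) (x y : X) :
    DA A x y ≤ dist x y := by
  classical
  unfold DA
  split_ifs with hx hy hy
  · exact dist_nonneg
  · calc infDist y A ≤ dist y x := infDist_le_dist_of_mem hx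
      _ = dist x y := dist_comm y x
  · exact infDist_le_dist_of_mem hy
  · exact min_le_left _ _

/-- The topology on `X/∼` induced by the metric `D_A` coincides with the quotient
topology: a set `U ⊆ X/∼` is open in the quotient topology iff it is open in the
metric sense for `D_A`. -/
theorem quotientTopology_eq_DA_topology
    {X : Type*} [MetricSpace X] [CompactSpace X]
    (A : Set X) (hA : IsClosed A) (hAne : A.Nonempty)
    (U : Set (Quot (collapseRel A))) :
    IsOpen U ↔
      ∀ x : X, Quot.mk (collapseRel A) x ∈ U →
        ∃ ε > 0, ∀ y : X, DA A x y < ε → Quot.mk (collapseRel A) y ∈ U := by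
  classical
  set q : X → Quot (collapseRel A) := Quot.mk (collapseRel A) with hq
  constructor
  · intro hU x hx
    have hV : IsOpen (q ⁻¹' U) := hU.preimage continuous_quot_mk
    by_cases hxA : x ∈ A
    · -- A is contained in the preimage
      have hAsub : A ⊆ q ⁻¹' U := by
        intro a ha
        have : q a = q x := Quot.sound (Or.inr ⟨ha, hxA⟩)
        simpa [Set.mem_preimage, this] using hx
      obtain ⟨δ, hδ, hth⟩ := hA.isCompact.exists_thickening_subset_open hV hAsub
      refine ⟨δ, hδ, fun y hy => ?_⟩
      by_cases hyA : y ∈ A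
      · exact hAsub hyA
      · have : infDist y A < δ := by simpa [DA, hxA, hyA] using hy
        exact hth ((mem_thickening_iff_infDist_lt hAne).2 this)
    · obtain ⟨r, hr, hball⟩ := Metric.isOpen_iff.1 hV x hx
      by_cases hAV : ∃ a ∈ A, q a ∈ U
      · -- A ⊆ preimage
        obtain ⟨a0, ha0, ha0U⟩ := hAV
        have hAsub : A ⊆ q ⁻¹' U := by
          intro a ha
          have : q a = q a0 := Quot.sound (Or.inr ⟨ha, ha0⟩)
          simpa [Set.mem_preimage, this] using ha0U
        obtain ⟨δ, hδ, hth⟩ := hA.isCompact.exists_thickening_subset_open hV hAsub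
        refine ⟨min r δ, lt_min hr hδ, fun y hy => ?_⟩
        by_cases hyA : y ∈ A
        · exact hAsub hyA
        · have hy' : min (dist x y) (infDist x A + infDist y A) < min r δ := by
            simpa [DA, hxA, hyA] using hy
          rcases min_lt_iff.1 hy' with h | h
          · exact hball (mem_ball'.2 (h.trans_le (min_le_left r δ)))
          · have : infDist y A < δ :=
              lt_of_le_of_lt (le_add_of_nonneg_left infDist_nonneg)
                (h.trans_le (min_le_right r δ))
            exact hth ((mem_thickening_iff_infDist_lt hAne).2 this)
      · push_neg at hAV
        have hxpos : 0 < infDist x A := (hA.notMem_iff_infDist_pos hAne).1 hxA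
        refine ⟨min r (infDist x A), lt_min hr hxpos, fun y hy => ?_⟩
        by_cases hyA : y ∈ A
        · exfalso
          have : infDist x A < min r (infDist x A) := by simpa [DA, hxA, hyA] using hy
          exact absurd (min_le_right r (infDist x A)) (not_le.2 this)
        · have hy' : min (dist x y) (infDist x A + infDist y A) < min r (infDist x A) := by
            simpa [DA, hxA, hyA] using hy
          rcases min_lt_iff.1 hy' with h | h
          · exact hball (mem_ball'.2 (h.trans_le (min_le_left _ _)))
          · exfalso
            have h3 : infDist x A ≤ infDist x A + infDist y A :=
              le_add_of_nonneg_right infDist_nonneg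
            exact absurd (h3.trans_lt (h.trans_le (min_le_right _ _))) (lt_irrefl _)
  · intro h
    have hqm := isQuotientMap_quot_mk (r := collapseRel A)
    rw [← hqm.isOpen_preimage, Metric.isOpen_iff]
    intro z hz
    obtain ⟨ε, hε, hεU⟩ := h z hz
    refine ⟨ε, hε, fun y hy => ?_⟩
    exact hεU y ((DA_le_dist A z y).trans_lt (mem_ball'.1 hy))
end

section
/- Let X be a compact metric space and F a closed relation on X. If for each (x,y) ∈ F there exist a positive integer n and a point z = (z_1,...,z_{n+1}) with z_1 = y, z_{n+1} = x, and (z_i, z_{i+1}) ∈ F for all i ≤ n, then the set of periodic points of the shift map σ_F^+ is dense in the Mahavier product X_F^+. -/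
/-- The one-sided Mahavier product of a closed relation `F` on `X`. -/
def MahavierPlus {X : Type*} (F : Set (X × X)) : Set (ℕ → X) :=
  {x | ∀ i : ℕ, (x i, x (i + 1)) ∈ F}

/-- The shift map on sequences. -/
def shiftMap {X : Type*} (x : ℕ → X) : ℕ → X := fun i => x (i + 1)

theorem shiftMap_iterate {X : Type*} (x : ℕ → X) (n i : ℕ) :
    (shiftMap^[n] x) i = x (i + n) := by
  induction n generalizing x i with
  | zero => rfl
  | succ n ih =>
    rw [Function.iterate_succ_apply, ih]
    simp only [shiftMap]
    ring_nf

/-- If for each `(x,y) ∈ F` there is a finite `F`-chain from `y` back to `x`, then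
the set of periodic points of the shift map `σ_F^+` is dense in `X_F^+`. -/
theorem periodic_points_dense_of_chains
    {X : Type*} [MetricSpace X] [CompactSpace X]
    (F : Set (X × X)) (hF : IsClosed F)
    (h : ∀ x y : X, (x, y) ∈ F → ∃ n : ℕ, 0 < n ∧ ∃ z : ℕ → X,
        z 0 = y ∧ z n = x ∧ ∀ i < n, (z i, z (i + 1)) ∈ F) :
    ∀ x ∈ MahavierPlus F, x ∈
      closure {p | p ∈ MahavierPlus F ∧ ∃ n : ℕ, 0 < n ∧ shiftMap^[n] p = p} := by
  intro x hx
  -- For each k, there is an F-chain from x k back to x 0.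
  have key : ∀ k : ℕ, ∃ m : ℕ, ∃ w : ℕ → X, w 0 = x k ∧ w m = x 0 ∧
      ∀ i < m, (w i, w (i + 1)) ∈ F := by
    intro k
    induction k with
    | zero => exact ⟨0, fun _ => x 0, rfl, rfl, fun i hi => absurd hi (by omega)⟩
    | succ k ih =>
      obtain ⟨m, w, hw0, hwm, hw⟩ := ih
      obtain ⟨n, hn, z, hz0, hzn, hz⟩ := h (x k) (x (k + 1)) (hx k)
      refine ⟨n + m, fun i => if i ≤ n then z i else w (i - n), ?_, ?_, ?_⟩
      · simp [hz0]
      · by_cases hm : m = 0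
        · subst hm
          simp only [Nat.add_zero, if_pos le_rfl, hzn]
          rw [← hw0, hwm]
        · have hnm : ¬ n + m ≤ n := by omega
          simp only [if_neg hnm, Nat.add_sub_cancel_left, hwm]
      · intro i hi
        by_cases h1 : i + 1 ≤ n
        · have h2 : i ≤ n := by omega
          simp only [if_pos h1, if_pos h2]
          exact hz i (by omega)
        · by_cases h2 : i ≤ n
          · have hin : i = n := by omega
            have e1 : i + 1 - n = 1 := by omega
            simp only [if_pos h2, if_neg h1, e1]
            rw [hin, hzn, ← hw0]
            exact hw 0 (by omega)
          · have e1 : i + 1 - n = (i - n) + 1 := by omega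
            simp only [if_neg h1, if_neg h2, e1]
            exact hw (i - n) (by omega)
  -- For each N, there is a periodic point agreeing with x on [0, N].
  have main : ∀ N : ℕ, ∃ p : ℕ → X,
      (p ∈ MahavierPlus F ∧ ∃ n : ℕ, 0 < n ∧ shiftMap^[n] p = p) ∧
      ∀ i ≤ N, p i = x i := by
    intro N
    obtain ⟨m, w, hw0, hwm, hw⟩ := key (N + 1)
    set L : ℕ := N + 1 + m with hL
    have hLpos : 0 < L := by omega
    set g : ℕ → X := fun i => if i ≤ N then x i else w (i - (N + 1)) with hg
    refine ⟨fun i => g (i % L), ⟨?_, L, hLpos, ?_⟩, ?_⟩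
    · -- edges
      intro i
      set r := i % L with hr
      have hrL : r < L := Nat.mod_lt i hLpos
      have hs : (i + 1) % L = (r + 1) % L := by
        conv_lhs => rw [← Nat.mod_add_div i L, Nat.add_right_comm, ← hr]
        exact Nat.add_mul_mod_self_left (r + 1) L (i / L)
      show (g r, g ((i + 1) % L)) ∈ F
      rw [hs]
      by_cases hc : r + 1 = L
      · rw [hc, Nat.mod_self]
        have hg0 : g 0 = w m := by
          simp only [hg, if_pos (Nat.zero_le N), ← hwm]
        rw [hg0]
        by_cases hm : m = 0
        · have hrN : r = N := by omega
          have : g r = x N := by simp only [hg, hrN, if_pos le_rfl]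
          rw [this, hm, hw0]
          exact hx N
        · have hrN : ¬ r ≤ N := by omega
          have : g r = w (m - 1) := by
            have : r - (N + 1) = m - 1 := by omega
            simp only [hg, if_neg hrN, this]
          rw [this]
          have e : m - 1 + 1 = m := by omega
          have := hw (m - 1) (by omega)
          rwa [e] at this
      · rw [Nat.mod_eq_of_lt (by omega)]
        by_cases h1 : r + 1 ≤ N
        · simp only [hg, if_pos h1, if_pos (by omega : r ≤ N)]
          exact hx r
        · by_cases h2 : r ≤ N
          · have hrN : r = N := by omega
            have e : r + 1 - (N + 1) = 0 := by omega
            simp only [hg, if_pos h2, if_neg h1, e, hw0]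
            rw [hrN]
            exact hx N
          · have e : r + 1 - (N + 1) = (r - (N + 1)) + 1 := by omega
            simp only [hg, if_neg h1, if_neg h2, e]
            exact hw (r - (N + 1)) (by omega)
    · -- periodicity
      funext i
      rw [shiftMap_iterate]
      simp [Nat.add_mod_right]
    · intro i hi
      have : i % L = i := Nat.mod_eq_of_lt (by omega)
      simp only [this, hg]
      rw [if_pos hi]
  choose p hp hpx using main
  have tend : Filter.Tendsto p Filter.atTop (nhds x) := by
    rw [tendsto_pi_nhds]
    intro i
    apply Filter.Tendsto.congr' (f₁ := fun _ => x i)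
    · filter_upwards [Filter.eventually_ge_atTop i] with N hN
      exact (hpx N i hN).symm
    · exact tendsto_const_nhds
  exact mem_closure_of_tendsto tend (Filter.Eventually.of_forall hp)
end

section
/- Let (X,f) be a dynamical system with f surjective, and let σ be the shift homeomorphism on lim←(X,f). Then (X,f) is transitive if and only if (lim←(X,f), σ^{-1}) is transitive. -/
/-- The inverse limit of a single map `f : X → X`. -/
def InvLim {X : Type*} (f : X → X) : Set (ℕ → X) :=
  {x | ∀ i : ℕ, x i = f (x (i + 1))}

/-- The inverse of the shift homeomorphism on the inverse limit:
`σ⁻¹(x₁,x₂,…) = (f(x₁),x₁,x₂,…)`. -/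
def shiftInv {X : Type*} (f : X → X) (x : ℕ → X) : ℕ → X :=
  fun i => match i with
  | 0 => f (x 0)
  | i + 1 => x i

namespace InvLimAux

variable {X : Type*} (f : X → X)

lemma invLim_apply {x : ℕ → X} (hx : x ∈ InvLim f) {i k : ℕ} (h : i ≤ k) :
    x i = f^[k - i] (x k) := by
  induction k with
  | zero => interval_cases i; simp
  | succ k ih =>
    rcases Nat.lt_or_ge i (k+1) with h' | h'
    · have hi : i ≤ k := Nat.lt_succ_iff.mp h'
      have hk : k + 1 - i = (k - i) + 1 := by omega
      rw [ih hi, hk, Function.iterate_succ_apply]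
      congr 1
      exact hx k
    · have : i = k + 1 := le_antisymm h h'
      subst this; simp

lemma shiftInv_mem {x : ℕ → X} (hx : x ∈ InvLim f) : shiftInv f x ∈ InvLim f := by
  intro i
  cases i with
  | zero => rfl
  | succ i => exact hx i

lemma shiftInv_iter_mem {x : ℕ → X} (hx : x ∈ InvLim f) (n : ℕ) :
    (shiftInv f)^[n] x ∈ InvLim f := by
  induction n with
  | zero => exact hx
  | succ n ih => rw [Function.iterate_succ_apply']; exact shiftInv_mem f ih

lemma shiftInv_iter_zero (x : ℕ → X) (n : ℕ) :
    (shiftInv f)^[n] x 0 = f^[n] (x 0) := by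
  induction n with
  | zero => rfl
  | succ n ih =>
    rw [Function.iterate_succ_apply', Function.iterate_succ_apply']
    show f ((shiftInv f)^[n] x 0) = _
    rw [ih]

lemma shiftInv_iter_add (x : ℕ → X) (n i : ℕ) :
    (shiftInv f)^[n] x (i + n) = x i := by
  induction n generalizing x i with
  | zero => rfl
  | succ n ih =>
    rw [Function.iterate_succ_apply]
    have h1 : i + (n + 1) = (i + 1) + n := by omega
    rw [h1, ih (shiftInv f x) (i + 1)]
    rfl

/-- Backward extension: for any `z` and `k` there is `x ∈ InvLim f` with `x k = z`. -/
lemma exists_invLim (hsurj : Function.Surjective f) (z : X) (k : ℕ) :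
    ∃ x ∈ InvLim f, x k = z := by
  classical
  set s := Function.surjInv hsurj with hs
  have hfs : ∀ y, f (s y) = y := fun y => Function.surjInv_eq hsurj y
  refine ⟨fun i => if i ≤ k then f^[k - i] z else s^[i - k] z, ?_, by simp⟩
  intro i
  by_cases h1 : i + 1 ≤ k
  · simp only [if_pos (by omega : i ≤ k), if_pos h1]
    have hk : k - i = (k - (i+1)) + 1 := by omega
    rw [hk, Function.iterate_succ_apply']
  · by_cases h2 : i ≤ k
    · have hik : i = k := by omega
      subst hik
      simp only [if_pos le_rfl, Nat.sub_self, if_neg h1]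
      have h3 : i + 1 - i = 1 := by omega
      rw [h3]
      simp [hfs]
    · simp only [if_neg h2, if_neg (by omega : ¬ i + 1 ≤ k)]
      have h3 : i + 1 - k = (i - k) + 1 := by omega
      rw [h3, Function.iterate_succ_apply', hfs]

variable [TopologicalSpace X]

/-- From an open set containing a point of the inverse limit, extract a single-coordinate
window. -/
lemma exists_window (hf : Continuous f)
    {U : Set (ℕ → X)} (hU : IsOpen U) {u : ℕ → X} (hu : u ∈ U) (huL : u ∈ InvLim f) :
    ∃ k : ℕ, ∃ W : Set X, IsOpen W ∧ u k ∈ W ∧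
      ∀ y ∈ InvLim f, y k ∈ W → y ∈ U := by
  obtain ⟨I, t, h1, h2⟩ := isOpen_pi_iff.mp hU u hu
  set k := I.sup id with hk
  have hle : ∀ i ∈ I, i ≤ k := fun i hi => Finset.le_sup (f := id) hi
  refine ⟨k, ⋂ i ∈ I, f^[k - i] ⁻¹' t i, ?_, ?_, ?_⟩
  · exact isOpen_biInter_finset fun i hi => ((h1 i hi).1).preimage (hf.iterate _)
  · refine Set.mem_biInter fun i hi => ?_
    have : u i = f^[k - i] (u k) := invLim_apply f huL (hle i hi)
    simpa [← this] using (h1 i hi).2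
  · intro y hyL hyW
    apply h2
    intro i hi
    have : y i = f^[k - i] (y k) := invLim_apply f hyL (hle i hi)
    rw [this]
    exact Set.mem_iInter₂.mp hyW i hi

end InvLimAux

open InvLimAux
/-- For a surjective `f`, `(X,f)` is transitive iff `(lim←(X,f), σ⁻¹)` is transitive. -/
theorem transitive_iff_transitive_invLim
    {X : Type*} [MetricSpace X] [CompactSpace X]
    (f : X → X) (hf : Continuous f) (hsurj : Function.Surjective f) :
    (∀ U V : Set X, IsOpen U → IsOpen V → U.Nonempty → V.Nonempty →
        ∃ n : ℕ, (f^[n] '' U ∩ V).Nonempty) ↔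
    (∀ U V : Set (ℕ → X), IsOpen U → IsOpen V →
        (U ∩ InvLim f).Nonempty → (V ∩ InvLim f).Nonempty →
        ∃ n : ℕ, ((shiftInv f)^[n] '' (U ∩ InvLim f) ∩ (V ∩ InvLim f)).Nonempty) := by
  constructor
  · intro hT U V hUo hVo hUne hVne
    obtain ⟨u, huU, huL⟩ := hUne
    obtain ⟨v, hvV, hvL⟩ := hVne
    obtain ⟨k, W, hWo, hWu, hWin⟩ := exists_window f hf hUo huU huL
    obtain ⟨m, W', hW'o, hW'v, hW'in⟩ := exists_window f hf hVo hvV hvL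
    have hopen : IsOpen (f^[k] ⁻¹' W') := hW'o.preimage (hf.iterate k)
    have hne : (f^[k] ⁻¹' W').Nonempty := by
      refine ⟨v (m + k), ?_⟩
      have h := invLim_apply f hvL (show m ≤ m + k by omega)
      have h' : m + k - m = k := by omega
      rw [h', ] at h
      show f^[k] (v (m + k)) ∈ W'
      rw [← h]; exact hW'v
    obtain ⟨N, w, ⟨z, hzW, hzw⟩, hw2⟩ := hT W (f^[k] ⁻¹' W') hWo hopen ⟨u k, hWu⟩ hne
    subst hzw
    obtain ⟨x, hxL, hxk⟩ := exists_invLim f hsurj z k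
    have hxU : x ∈ U := hWin x hxL (by rw [hxk]; exact hzW)
    refine ⟨N + m, (shiftInv f)^[N + m] x, ⟨x, ⟨hxU, hxL⟩, rfl⟩, ?_,
      shiftInv_iter_mem f hxL (N + m)⟩
    apply hW'in _ (shiftInv_iter_mem f hxL (N + m))
    have e1 : (shiftInv f)^[N + m] x m = f^[N] (x 0) := by
      have hsplit : (shiftInv f)^[N + m] x = (shiftInv f)^[m] ((shiftInv f)^[N] x) := by
        rw [Nat.add_comm, Function.iterate_add_apply]
      have h0 : (shiftInv f)^[m] ((shiftInv f)^[N] x) (0 + m) = (shiftInv f)^[N] x 0 :=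
        shiftInv_iter_add f _ m 0
      rw [hsplit]
      simpa [shiftInv_iter_zero f x N] using h0
    have e2 : x 0 = f^[k] z := by
      have := invLim_apply f hxL (Nat.zero_le k)
      rwa [Nat.sub_zero, hxk] at this
    have e3 : f^[N] (f^[k] z) = f^[k] (f^[N] z) := by
      rw [← Function.iterate_add_apply, ← Function.iterate_add_apply, Nat.add_comm]
    rw [e1, e2, e3]
    exact hw2
  · intro hT U V hUo hVo hUne hVne
    obtain ⟨u0, hu0⟩ := hUne
    obtain ⟨v0, hv0⟩ := hVne
    obtain ⟨xu, hxuL, hxu0⟩ := exists_invLim f hsurj u0 0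
    obtain ⟨xv, hxvL, hxv0⟩ := exists_invLim f hsurj v0 0
    have hUo' : IsOpen ((fun y : ℕ → X => y 0) ⁻¹' U) := hUo.preimage (continuous_apply 0)
    have hVo' : IsOpen ((fun y : ℕ → X => y 0) ⁻¹' V) := hVo.preimage (continuous_apply 0)
    obtain ⟨n, y, ⟨x, ⟨hxU, hxL⟩, rfl⟩, hyV, -⟩ :=
      hT _ _ hUo' hVo' ⟨xu, (by rw [Set.mem_preimage, hxu0]; exact hu0), hxuL⟩
        ⟨xv, (by rw [Set.mem_preimage, hxv0]; exact hv0), hxvL⟩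
    refine ⟨n, f^[n] (x 0), ⟨x 0, hxU, rfl⟩, ?_⟩
    have := shiftInv_iter_zero f x n
    rw [← this]
    exact hyV
end

section
/- Let (X,f) be a dynamical system, A ⊆ X a nowhere dense closed subset with f(A) ⊆ A and f(X\A) ⊆ X\A, and ∼ the equivalence relation collapsing A to a point. Then (X,f) has sensitive dependence on initial conditions with respect to A if and only if the quotient system (X/∼, f*) has sensitive dependence on initial conditions (with respect to the metric D_A on X/∼). -/
open Metric

lemma DA_eq {X : Type*} [MetricSpace X] (A : Set X) (x y : X) :
    DA A x y = min (dist x y) (infDist x A + infDist y A) := by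
  unfold DA
  split_ifs with hx hy hy <;>
    simp [infDist_zero_of_mem, hx, hy]
  · exact (infDist_le_dist_of_mem hx).trans_eq (dist_comm y x)
  · exact infDist_le_dist_of_mem hy

lemma DA_symm {X : Type*} [MetricSpace X] (A : Set X) (x y : X) :
    DA A x y = DA A y x := by
  rw [DA_eq, DA_eq, dist_comm, add_comm]

lemma DA_triangle {X : Type*} [MetricSpace X] (A : Set X) (x y z : X) :
    DA A x z ≤ DA A x y + DA A y z := by
  rw [DA_eq, DA_eq, DA_eq]
  have h1 := dist_triangle x y z
  have h2 : infDist x A ≤ infDist y A + dist x y := infDist_le_infDist_add_dist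
  have h3 : infDist z A ≤ infDist y A + dist z y := infDist_le_infDist_add_dist
  rw [dist_comm z y] at h3
  have h4 : (0:ℝ) ≤ infDist y A := infDist_nonneg
  have l1 := min_le_left (dist x z) (infDist x A + infDist z A)
  have l2 := min_le_right (dist x z) (infDist x A + infDist z A)
  rcases le_total (dist x y) (infDist x A + infDist y A) with h | h <;>
    rcases le_total (dist y z) (infDist y A + infDist z A) with h' | h' <;>
    [rw [min_eq_left h, min_eq_left h']; rw [min_eq_left h, min_eq_right h'];
     rw [min_eq_right h, min_eq_left h']; rw [min_eq_right h, min_eq_right h']] <;>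
    linarith

/-- `(X,f)` has sensitive dependence on initial conditions with respect to `A` iff
the quotient system `(X/∼, f*)` (with the metric `D_A`, expressed via representatives,
since the quotient map is a bijection classes-to-points outside `A`) has sensitive
dependence on initial conditions. -/
theorem sensitive_wrt_iff_quotient_sensitive
    {X : Type*} [MetricSpace X] [CompactSpace X]
    (f : X → X) (hf : Continuous f)
    (A : Set X) (hA : IsClosed A) (hAnwd : interior (closure A) = ∅)
    (hAinv : Set.MapsTo f A A) (hAcinv : Set.MapsTo f Aᶜ Aᶜ) :
    (∃ ε > (0:ℝ), ∀ U : Set X, IsOpen U → U.Nonempty →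
        ∃ x ∈ U, ∃ y ∈ U, ∃ n : ℕ, 0 < n ∧
          min (dist (f^[n] x) (f^[n] y)) (infDist (f^[n] x) A + infDist (f^[n] y) A)
            > ε) ↔
    (∃ ε > (0:ℝ), ∀ x : X, ∀ δ > (0:ℝ), ∃ y : X, DA A x y < δ ∧
        ∃ n : ℕ, 0 < n ∧ DA A (f^[n] x) (f^[n] y) > ε) := by
  constructor
  · rintro ⟨ε, hε, H⟩
    refine ⟨ε / 2, by linarith, fun x δ hδ => ?_⟩
    obtain ⟨x', hx', y', hy', n, hn, hmin⟩ :=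
      H (Metric.ball x δ) Metric.isOpen_ball ⟨x, Metric.mem_ball_self hδ⟩
    rw [← DA_eq] at hmin
    by_cases hcase : DA A (f^[n] x) (f^[n] x') > ε / 2
    · exact ⟨x', (DA_le_dist A x x').trans_lt (Metric.mem_ball'.mp hx'), n, hn, hcase⟩
    · push_neg at hcase
      refine ⟨y', (DA_le_dist A x y').trans_lt (Metric.mem_ball'.mp hy'), n, hn, ?_⟩
      have tri := DA_triangle A (f^[n] x') (f^[n] x) (f^[n] y')
      rw [DA_symm A (f^[n] x') (f^[n] x)] at tri
      linarith
  · rintro ⟨ε, hε, H⟩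
    refine ⟨ε, hε, fun U hU hUne => ?_⟩
    have hIA : interior A = ∅ := by rwa [hA.closure_eq] at hAnwd
    have hUA : ¬ U ⊆ A := by
      intro hsub
      obtain ⟨u, hu⟩ := hUne
      exact absurd (hIA ▸ hU.subset_interior_iff.mpr hsub hu) (Set.notMem_empty u)
    obtain ⟨x, hxU, hxA⟩ := Set.not_subset.mp hUA
    by_cases hAne : A.Nonempty
    · have hpos : 0 < infDist x A := (hA.notMem_iff_infDist_pos hAne).mp hxA
      obtain ⟨r, hr, hball⟩ := Metric.isOpen_iff.mp hU x hxU
      set δ := min r (infDist x A) with hδdef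
      have hδ : 0 < δ := lt_min hr hpos
      obtain ⟨y, hy, n, hn, hmin⟩ := H x δ hδ
      rw [DA_eq] at hy
      have hsum : δ ≤ infDist x A + infDist y A :=
        (min_le_right r _).trans (le_add_of_nonneg_right infDist_nonneg)
      have hdxy : dist x y < δ := by
        rcases min_lt_iff.mp hy with h | h
        · exact h
        · linarith
      have hyU : y ∈ U := hball (by
        rw [Metric.mem_ball, dist_comm]
        exact hdxy.trans_le (min_le_left _ _))
      refine ⟨x, hxU, y, hyU, n, hn, ?_⟩
      rw [← DA_eq]
      exact hmin
    · obtain ⟨y, _, n, _, hmin⟩ := H x 1 one_pos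
      rw [DA_eq, Set.not_nonempty_iff_eq_empty.mp hAne, infDist_empty, infDist_empty,
        add_zero, min_eq_right dist_nonneg] at hmin
      linarith
end

section
/- Let (X,f) be a dynamical system, A ⊆ X a nowhere dense closed subset with f(A) ⊆ A and f(X\A) ⊆ X\A, and ∼ the equivalence relation defined by x ∼ y iff x = y or x,y ∈ A. Then the set of periodic points of f is dense in X if and only if the set of periodic points of the induced map f* on X/∼ is dense in X/∼. -/
/-- The induced map `f*` on the quotient `X/∼`, `f*([x]) = [f(x)]`. -/
def fstar {X : Type*} (A : Set X) (f : X → X) (hAinv : Set.MapsTo f A A) :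
    Quot (collapseRel A) → Quot (collapseRel A) :=
  Quot.map f (by
    rintro a b (rfl | ⟨ha, hb⟩)
    · exact Or.inl rfl
    · exact Or.inr ⟨hAinv ha, hAinv hb⟩)

lemma collapseRel_of_eqvGen {X : Type*} {A : Set X} {a b : X}
    (h : Relation.EqvGen (collapseRel A) a b) : collapseRel A a b := by
  induction h with
  | rel _ _ h => exact h
  | refl => exact Or.inl rfl
  | symm _ _ _ ih =>
      rcases ih with rfl | ⟨h1, h2⟩
      · exact Or.inl rfl
      · exact Or.inr ⟨h2, h1⟩
  | trans _ _ _ _ _ ih1 ih2 =>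
      rcases ih1 with rfl | ⟨h1, h2⟩
      · exact ih2
      · rcases ih2 with rfl | ⟨h3, h4⟩
        · exact Or.inr ⟨h1, h2⟩
        · exact Or.inr ⟨h1, h4⟩

lemma fstar_iterate_mk {X : Type*} (A : Set X) (f : X → X) (hAinv : Set.MapsTo f A A)
    (n : ℕ) (x : X) :
    (fstar A f hAinv)^[n] (Quot.mk _ x) = Quot.mk _ (f^[n] x) := by
  induction n with
  | zero => rfl
  | succ n ih =>
      rw [Function.iterate_succ_apply', Function.iterate_succ_apply', ih]
      rfl

/-- For a nowhere dense closed invariant `A` (with invariant complement), the set of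
periodic points of `f` is dense in `X` iff the set of periodic points of the induced
map `f*` is dense in `X/∼`. -/
theorem periodic_dense_iff_quotient_periodic_dense
    {X : Type*} [MetricSpace X] [CompactSpace X]
    (f : X → X) (hf : Continuous f)
    (A : Set X) (hA : IsClosed A) (hAnwd : interior (closure A) = ∅)
    (hAinv : Set.MapsTo f A A) (hAcinv : Set.MapsTo f Aᶜ Aᶜ) :
    Dense {p : X | ∃ n : ℕ, 0 < n ∧ f^[n] p = p} ↔
    Dense {q : Quot (collapseRel A) |
      ∃ n : ℕ, 0 < n ∧ (fstar A f hAinv)^[n] q = q} := by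
  set π : X → Quot (collapseRel A) := Quot.mk _ with hπ
  constructor
  · intro hD
    have hsurj : Function.Surjective π := Quot.exists_rep
    have hcont : Continuous π := continuous_quot_mk
    have himg : Dense (π '' {p : X | ∃ n : ℕ, 0 < n ∧ f^[n] p = p}) :=
      (hsurj.denseRange).dense_image hcont hD
    refine himg.mono ?_
    rintro q ⟨x, ⟨n, hn, hx⟩, rfl⟩
    exact ⟨n, hn, by rw [hπ, fstar_iterate_mk, hx]⟩
  · intro hD
    rw [dense_iff_inter_open]
    intro U hUopen hUne
    set V : Set X := U ∩ (closure A)ᶜ with hV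
    have hVopen : IsOpen V := hUopen.inter isClosed_closure.isOpen_compl
    have hVne : V.Nonempty := by
      by_contra h
      rw [Set.not_nonempty_iff_eq_empty] at h
      have hsub : U ⊆ closure A := by
        intro x hx
        by_contra hx'
        have : x ∈ V := ⟨hx, hx'⟩
        rw [h] at this
        exact this
      have : U ⊆ interior (closure A) := hUopen.subset_interior_iff.mpr hsub
      rw [hAnwd, Set.subset_empty_iff] at this
      exact hUne.ne_empty this
    have hVA : ∀ x ∈ V, x ∉ A := fun x hx hxA => hx.2 (subset_closure hxA)
    have hsat : π ⁻¹' (π '' V) = V := by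
      ext x
      constructor
      · rintro ⟨v, hv, hvx⟩
        rcases collapseRel_of_eqvGen (Quot.eq.mp hvx) with rfl | ⟨h1, _⟩
        · exact hv
        · exact absurd h1 (hVA v hv)
      · exact fun hx => ⟨x, hx, rfl⟩
    have hopen : IsOpen (π '' V) := by
      rw [isOpen_coinduced (f := π)]  -- quotient topology
      rw [hsat]; exact hVopen
    obtain ⟨q, hqV, hqT⟩ := (dense_iff_inter_open.mp hD) (π '' V) hopen
      ((hVne.image π))
    rcases hqV with ⟨x, hxV, rfl⟩
    obtain ⟨n, hn, hq⟩ := hqT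
    rw [hπ, fstar_iterate_mk] at hq
    rcases collapseRel_of_eqvGen (Quot.eq.mp hq) with heq | ⟨_, h2⟩
    · exact ⟨x, hxV.1, ⟨n, hn, heq⟩⟩
    · exact absurd h2 (hVA x hxV)
end

section
/- Let (X,f) be a dynamical system, A ⊆ X a nowhere dense closed subset with f(A) ⊆ A and f(X\A) ⊆ X\A, and ∼ the equivalence relation collapsing A to a point. Then (X,f) is transitive if and only if the quotient system (X/∼, f*) is transitive. -/
/-- For a nowhere dense closed invariant `A` (with invariant complement), `(X,f)` is
transitive iff the quotient system `(X/∼, f*)` is transitive. -/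
theorem transitive_iff_quotient_transitive
    {X : Type*} [MetricSpace X] [CompactSpace X]
    (f : X → X) (hf : Continuous f)
    (A : Set X) (hA : IsClosed A) (hAnwd : interior (closure A) = ∅)
    (hAinv : Set.MapsTo f A A) (hAcinv : Set.MapsTo f Aᶜ Aᶜ) :
    (∀ U V : Set X, IsOpen U → IsOpen V → U.Nonempty → V.Nonempty →
        ∃ n : ℕ, (f^[n] '' U ∩ V).Nonempty) ↔
    (∀ U V : Set (Quot (collapseRel A)), IsOpen U → IsOpen V →
        U.Nonempty → V.Nonempty →
        ∃ n : ℕ, ((fstar A f hAinv)^[n] '' U ∩ V).Nonempty) := by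
  set q : X → Quot (collapseRel A) := Quot.mk _ with hq
  have hcomm : ∀ (n : ℕ) (x : X), (fstar A f hAinv)^[n] (q x) = q (f^[n] x) := by
    intro n
    induction n with
    | zero => intro x; simp
    | succ n ih =>
      intro x
      rw [Function.iterate_succ_apply, Function.iterate_succ_apply]
      have : fstar A f hAinv (q x) = q (f x) := rfl
      rw [this, ih]
  have hopen : ∀ W : Set X, IsOpen W → Disjoint W A → IsOpen (q '' W) := by
    intro W hW hdis
    rw [isOpen_coinduced (f := Quot.mk (collapseRel A))]
    have : Quot.mk (collapseRel A) ⁻¹' (q '' W) = W := by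
      ext x
      constructor
      · rintro ⟨w, hw, hqw⟩
        have := Quot.eqvGen_exact hqw
        rw [Equivalence.eqvGen_iff] at this
        · rcases this with rfl | ⟨hwA, hxA⟩
          · exact hw
          · exact absurd hwA (Set.disjoint_left.mp hdis hw)
        · constructor
          · intro a; exact Or.inl rfl
          · rintro a b (rfl | ⟨h1, h2⟩); exacts [Or.inl rfl, Or.inr ⟨h2, h1⟩]
          · rintro a b c (rfl | ⟨h1, h2⟩) (rfl | ⟨h3, h4⟩)
            exacts [Or.inl rfl, Or.inr ⟨h3, h4⟩, Or.inr ⟨h1, h2⟩, Or.inr ⟨h1, h4⟩]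
      · intro hx; exact ⟨x, hx, rfl⟩
    rw [this]; exact hW
  constructor
  · -- transitivity descends to quotient
    intro h U V hU hV ⟨u, hu⟩ ⟨v, hv⟩
    obtain ⟨x, rfl⟩ := Quot.exists_rep u
    obtain ⟨y, rfl⟩ := Quot.exists_rep v
    have hU' : IsOpen (q ⁻¹' U) := hU.preimage continuous_quot_mk
    have hV' : IsOpen (q ⁻¹' V) := hV.preimage continuous_quot_mk
    obtain ⟨n, z, ⟨w, hwU, hwz⟩, hzV⟩ := h (q ⁻¹' U) (q ⁻¹' V) hU' hV' ⟨x, hu⟩ ⟨y, hv⟩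
    refine ⟨n, q z, ⟨q w, hwU, ?_⟩, hzV⟩
    rw [hcomm]; exact congrArg q hwz
  · -- transitivity lifts
    intro h U V hU hV hUne hVne
    have key : ∀ W : Set X, IsOpen W → W.Nonempty → (W \ closure A).Nonempty := by
      intro W hW hWne
      by_contra hc
      rw [Set.not_nonempty_iff_eq_empty, Set.diff_eq_empty] at hc
      have : W ⊆ interior (closure A) := hW.subset_interior_iff.mpr hc
      rw [hAnwd, Set.subset_empty_iff] at this
      exact hWne.ne_empty this
    have hU2 : IsOpen (U \ closure A) := hU.sdiff isClosed_closure
    have hV2 : IsOpen (V \ closure A) := hV.sdiff isClosed_closure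
    have hdU : Disjoint (U \ closure A) A :=
      Set.disjoint_left.mpr fun x hx hxA => hx.2 (subset_closure hxA)
    have hdV : Disjoint (V \ closure A) A :=
      Set.disjoint_left.mpr fun x hx hxA => hx.2 (subset_closure hxA)
    obtain ⟨n, z, ⟨w, ⟨u, huU, hqu⟩, hwz⟩, hzV⟩ :=
      h (q '' (U \ closure A)) (q '' (V \ closure A)) (hopen _ hU2 hdU) (hopen _ hV2 hdV)
        ((key U hU hUne).image q) ((key V hV hVne).image q)
    subst hqu
    obtain ⟨v, hvV, hvz⟩ := hzV
    rw [hcomm] at hwz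
    have : f^[n] u = v := by
      have hfe : q (f^[n] u) = q v := hwz.trans hvz.symm
      have := Quot.eqvGen_exact hfe
      rw [Equivalence.eqvGen_iff] at this
      · rcases this with h' | ⟨_, hvA⟩
        · exact h'
        · exact absurd hvA (Set.disjoint_left.mp hdV hvV)
      · constructor
        · intro a; exact Or.inl rfl
        · rintro a b (rfl | ⟨h1, h2⟩); exacts [Or.inl rfl, Or.inr ⟨h2, h1⟩]
        · rintro a b c (rfl | ⟨h1, h2⟩) (rfl | ⟨h3, h4⟩)
          exacts [Or.inl rfl, Or.inr ⟨h3, h4⟩, Or.inr ⟨h1, h2⟩, Or.inr ⟨h1, h4⟩]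
    exact ⟨n, f^[n] u, ⟨u, huU.1, rfl⟩, this ▸ hvV.1⟩
end

section
/- Let (X,f) be a dynamical system, A a non-empty closed subset of X with f(A) ⊆ A, f surjective, and σ the shift homeomorphism on lim←(X,f). If (X,f) has sensitive dependence on initial conditions with respect to A, then (lim←(X,f), σ^{-1}) has sensitive dependence on initial conditions with respect to lim←(A, f|_A), where the inverse limit carries the product metric ρ(x,y) = max_k d(x_k,y_k)/2^k. -/
open Metric

/-- The product metric `ρ(x,y) = max_k d(x_k,y_k)/2^k` (indices starting at 1). -/
noncomputable def rho {X : Type*} [MetricSpace X] (x y : ℕ → X) : ℝ :=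
  ⨆ k : ℕ, dist (x k) (y k) / 2 ^ (k + 1)

/-- Distance of a point to a set with respect to `ρ`. -/
noncomputable def rhoDist {X : Type*} [MetricSpace X] (x : ℕ → X)
    (S : Set (ℕ → X)) : ℝ :=
  sInf {r : ℝ | ∃ a ∈ S, r = rho x a}

lemma rho_ge_half_dist {X : Type*} [MetricSpace X] [CompactSpace X]
    (z w : ℕ → X) : dist (z 0) (w 0) / 2 ≤ rho z w := by
  have hb : BddAbove (Set.range fun k : ℕ => dist (z k) (w k) / 2 ^ (k + 1)) := by
    refine ⟨Metric.diam (Set.univ : Set X), ?_⟩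
    rintro r ⟨k, rfl⟩
    have h1 : dist (z k) (w k) ≤ Metric.diam (Set.univ : Set X) :=
      Metric.dist_le_diam_of_mem isCompact_univ.isBounded (Set.mem_univ _) (Set.mem_univ _)
    have h2 : dist (z k) (w k) / 2 ^ (k + 1) ≤ dist (z k) (w k) := by
      apply div_le_self dist_nonneg
      exact one_le_pow₀ one_le_two
    linarith
  have := le_ciSup hb 0
  simpa [rho] using this

lemma rhoDist_ge_half_infDist {X : Type*} [MetricSpace X] [CompactSpace X]
    (z : ℕ → X) (A : Set X) (L : Set (ℕ → X)) (hL : L.Nonempty)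
    (hL0 : ∀ a ∈ L, a 0 ∈ A) :
    infDist (z 0) A / 2 ≤ rhoDist z L := by
  apply le_csInf
  · obtain ⟨a, ha⟩ := hL; exact ⟨rho z a, a, ha, rfl⟩
  · rintro r ⟨a, ha, rfl⟩
    calc infDist (z 0) A / 2 ≤ dist (z 0) (a 0) / 2 := by
          gcongr
          exact infDist_le_dist_of_mem (hL0 a ha)
      _ ≤ rho z a := rho_ge_half_dist z a

lemma shiftInv_iterate_zero {X : Type*} (f : X → X) (x : ℕ → X) (m : ℕ) :
    ((shiftInv f)^[m] x) 0 = f^[m] (x 0) := by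
  induction m with
  | zero => rfl
  | succ m ih =>
    rw [Function.iterate_succ_apply', Function.iterate_succ_apply']
    simp [shiftInv, ih]

lemma invLim_eq_iterate {X : Type*} {f : X → X} {x : ℕ → X} (hx : x ∈ InvLim f)
    (k i : ℕ) : x i = f^[k] (x (i + k)) := by
  induction k with
  | zero => rfl
  | succ k ih =>
    rw [show i + (k+1) = (i + k) + 1 by ring, Function.iterate_succ_apply,
        ← hx (i + k)]
    exact ih

lemma invLimA_nonempty {X : Type*} [MetricSpace X] [CompactSpace X] {f : X → X}
    (hf : Continuous f) {A : Set X} (hA : IsClosed A) (hAne : A.Nonempty)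
    (hAinv : Set.MapsTo f A A) :
    {z : ℕ → X | z ∈ InvLim f ∧ ∀ i, z i ∈ A}.Nonempty := by
  obtain ⟨a, ha⟩ := hAne
  have hiter : ∀ k, f^[k] a ∈ A := by
    intro k
    induction k with
    | zero => exact ha
    | succ k ih => rw [Function.iterate_succ_apply']; exact hAinv ih
  set S : ℕ → Set (ℕ → X) := fun n =>
    (⋂ i, (fun z : ℕ → X => z i) ⁻¹' A) ∩
      ⋂ i, ⋂ _ : i < n, {z : ℕ → X | z i = f (z (i + 1))} with hS
  have hclosed : ∀ n, IsClosed (S n) := by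
    intro n
    apply IsClosed.inter
    · exact isClosed_iInter fun i => hA.preimage (continuous_apply i)
    · exact isClosed_iInter fun i => isClosed_iInter fun _ =>
        isClosed_eq (continuous_apply i) (hf.comp (continuous_apply (i + 1)))
  have hne : ∀ n, (S n).Nonempty := by
    intro n
    refine ⟨fun i => f^[n - i] a, ?_, ?_⟩
    · exact Set.mem_iInter.mpr fun i => hiter _
    · simp only [Set.mem_iInter, Set.mem_setOf_eq]
      intro i hi
      have h3 : n - i = (n - (i + 1)) + 1 := by omega
      rw [h3, Function.iterate_succ_apply']
  have hdec : ∀ n, S (n + 1) ⊆ S n := by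
    intro n z hz
    refine ⟨hz.1, ?_⟩
    exact Set.mem_iInter₂.mpr fun i hi => Set.mem_iInter₂.mp hz.2 i (by omega)
  obtain ⟨z, hz⟩ := IsCompact.nonempty_iInter_of_sequence_nonempty_isCompact_isClosed
    S hdec hne ((hclosed 0).isCompact) hclosed
  refine ⟨z, ?_, ?_⟩
  · intro i
    have h2 := (Set.mem_iInter.mp hz (i + 1)).2
    exact Set.mem_iInter₂.mp h2 i (Nat.lt_succ_self i)
  · intro i
    exact Set.mem_iInter.mp (Set.mem_iInter.mp hz 0).1 i

/-- If `f` is surjective and `(X,f)` has sensitive dependence on initial conditions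
with respect to `A` (closed, non-empty, `f(A) ⊆ A`), then `(lim←(X,f), σ⁻¹)` has
sensitive dependence on initial conditions with respect to `lim←(A, f|_A)`. -/
theorem invLim_sensitive_wrt
    {X : Type*} [MetricSpace X] [CompactSpace X]
    (f : X → X) (hf : Continuous f) (hsurj : Function.Surjective f)
    (A : Set X) (hA : IsClosed A) (hAne : A.Nonempty) (hAinv : Set.MapsTo f A A)
    (hsens : ∃ ε > (0:ℝ), ∀ U : Set X, IsOpen U → U.Nonempty →
        ∃ x ∈ U, ∃ y ∈ U, ∃ n : ℕ, 0 < n ∧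
          min (dist (f^[n] x) (f^[n] y)) (infDist (f^[n] x) A + infDist (f^[n] y) A)
            > ε) :
    ∃ ε > (0:ℝ), ∀ U : Set (ℕ → X), IsOpen U → (U ∩ InvLim f).Nonempty →
        ∃ x ∈ U ∩ InvLim f, ∃ y ∈ U ∩ InvLim f, ∃ n : ℕ, 0 < n ∧
          min (rho ((shiftInv f)^[n] x) ((shiftInv f)^[n] y))
            (rhoDist ((shiftInv f)^[n] x) {z | z ∈ InvLim f ∧ ∀ i, z i ∈ A} +
              rhoDist ((shiftInv f)^[n] y) {z | z ∈ InvLim f ∧ ∀ i, z i ∈ A})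
            > ε := by
  obtain ⟨ε, hε, hs⟩ := hsens
  refine ⟨ε / 2, by linarith, ?_⟩
  intro U hU hUne
  obtain ⟨xh, hxhU, hxhI⟩ := hUne
  -- Step 1: basic neighborhood of xh inside U
  obtain ⟨I, u, hu, hIu⟩ := isOpen_pi_iff.mp hU xh hxhU
  have hball : ∀ i : ℕ, ∃ d : ℝ, 0 < d ∧ (i ∈ I → ball (xh i) d ⊆ u i) := by
    intro i
    by_cases hi : i ∈ I
    · obtain ⟨d, hd, hdsub⟩ := Metric.isOpen_iff.mp (hu i hi).1 (xh i) (hu i hi).2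
      exact ⟨d, hd, fun _ => hdsub⟩
    · exact ⟨1, one_pos, fun h => absurd h hi⟩
  choose dfun hdpos hdsub using hball
  set N : ℕ := I.sup id with hN
  set δ : ℝ := (insert 0 I).inf' (Finset.insert_nonempty 0 I) dfun with hδ
  have hδpos : 0 < δ := by
    rw [hδ]
    rw [Finset.lt_inf'_iff]
    exact fun i _ => hdpos i
  have hUsub : ∀ z : ℕ → X, (∀ i ≤ N, dist (z i) (xh i) < δ) → z ∈ U := by
    intro z hz
    apply hIu
    rw [Set.mem_pi]
    intro i hi
    have hi' : i ∈ I := hi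
    have hiN : i ≤ N := Finset.le_sup (f := id) hi'
    have hle : δ ≤ dfun i := Finset.inf'_le dfun (Finset.mem_insert_of_mem hi')
    exact hdsub i hi' (mem_ball.mpr (lt_of_lt_of_le (hz i hiN) hle))
  -- Step 2: iterate relation for xh
  have hxh_it : ∀ j, j ≤ N → f^[j] (xh N) = xh (N - j) := by
    intro j hj
    have := invLim_eq_iterate hxhI j (N - j)
    rw [Nat.sub_add_cancel hj] at this
    exact this.symm
  -- Step 3: uniform delta via continuity of iterates at xh N
  have hcont : ∀ j : ℕ, ∃ d > 0, ∀ ⦃w⦄, dist w (xh N) < d →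
      dist (f^[j] w) (f^[j] (xh N)) < min δ (ε / 2) := by
    intro j
    have := Metric.continuousAt_iff.mp ((hf.iterate j).continuousAt (x := xh N))
    exact this (min δ (ε / 2)) (lt_min hδpos (by linarith))
  choose cfun hcpos hcball using hcont
  set δ₀ : ℝ := (Finset.range (N + 1)).inf'
    Finset.nonempty_range_add_one cfun with hδ₀
  have hδ₀pos : 0 < δ₀ := by
    rw [hδ₀, Finset.lt_inf'_iff]
    exact fun j _ => hcpos j
  have hδ₀le : ∀ j, j ≤ N → δ₀ ≤ cfun j := fun j hj =>
    Finset.inf'_le _ (Finset.mem_range.mpr (by omega))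
  have hkey : ∀ w, dist w (xh N) < δ₀ → ∀ j, j ≤ N →
      dist (f^[j] w) (f^[j] (xh N)) < min δ (ε / 2) := fun w hw j hj =>
    hcball j (lt_of_lt_of_le hw (hδ₀le j hj))
  -- Step 4: apply sensitivity in X
  obtain ⟨x₀, hx₀, y₀, hy₀, n, hn, hmin⟩ :=
    hs (ball (xh N) δ₀) isOpen_ball ⟨xh N, mem_ball_self hδ₀pos⟩
  rw [gt_iff_lt, lt_min_iff] at hmin
  obtain ⟨hd, hdA⟩ := hmin
  -- Step 5: n > N
  have hnN : N < n := by
    by_contra h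
    push_neg at h
    have h1 := hkey x₀ (mem_ball.mp hx₀) n h
    have h2 := hkey y₀ (mem_ball.mp hy₀) n h
    have h1' : dist (f^[n] x₀) (f^[n] (xh N)) < ε / 2 :=
      lt_of_lt_of_le h1 (min_le_right _ _)
    have h2' : dist (f^[n] (xh N)) (f^[n] y₀) < ε / 2 := by
      rw [dist_comm]; exact lt_of_lt_of_le h2 (min_le_right _ _)
    have := dist_triangle (f^[n] x₀) (f^[n] (xh N)) (f^[n] y₀)
    linarith
  -- Step 6: backward orbit lift
  obtain ⟨g, hg⟩ : ∃ g : X → X, ∀ w, f (g w) = w :=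
    ⟨fun w => (hsurj w).choose, fun w => (hsurj w).choose_spec⟩
  set lift : X → ℕ → X := fun p i => f^[N - i] (g^[i - N] p) with hlift
  have hliftInv : ∀ p, lift p ∈ InvLim f := by
    intro p i
    rcases lt_or_ge i N with h | h
    · have h1 : i - N = 0 := by omega
      have h2 : (i + 1) - N = 0 := by omega
      have h3 : N - i = (N - (i + 1)) + 1 := by omega
      simp only [hlift, h1, h2, h3, Function.iterate_zero_apply,
        Function.iterate_succ_apply']
    · have h1 : N - i = 0 := by omega
      have h2 : N - (i + 1) = 0 := by omega
      have h3 : (i + 1) - N = (i - N) + 1 := by omega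
      simp only [hlift, h1, h2, h3, Function.iterate_zero_apply,
        Function.iterate_succ_apply']
      rw [hg]
  have hliftU : ∀ p, dist p (xh N) < δ₀ → lift p ∈ U := by
    intro p hp
    apply hUsub
    intro i hi
    have h1 : lift p i = f^[N - i] p := by
      simp only [hlift, show i - N = 0 by omega, Function.iterate_zero_apply]
    have h2 : f^[N - i] (xh N) = xh i := by
      have := hxh_it (N - i) (Nat.sub_le _ _)
      rwa [show N - (N - i) = i by omega] at this
    rw [h1, ← h2]
    exact lt_of_lt_of_le (hkey p hp (N - i) (Nat.sub_le _ _)) (min_le_left _ _)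
  -- Step 7: coordinate formula for the shifted lift
  set m : ℕ := n - N with hm
  have hm0 : 0 < m := by omega
  have hcoord : ∀ p, ((shiftInv f)^[m] (lift p)) 0 = f^[n] p := by
    intro p
    rw [shiftInv_iterate_zero]
    have h0 : lift p 0 = f^[N] p := by
      simp only [hlift, Nat.sub_zero, Nat.zero_sub, Function.iterate_zero_apply]
    rw [h0, ← Function.iterate_add_apply]
    congr 1
    omega
  -- Step 8: conclude
  refine ⟨lift x₀, ⟨hliftU x₀ (mem_ball.mp hx₀), hliftInv x₀⟩,
          lift y₀, ⟨hliftU y₀ (mem_ball.mp hy₀), hliftInv y₀⟩, m, hm0, ?_⟩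
  rw [gt_iff_lt, lt_min_iff]
  constructor
  · have h1 := rho_ge_half_dist ((shiftInv f)^[m] (lift x₀)) ((shiftInv f)^[m] (lift y₀))
    rw [hcoord x₀, hcoord y₀] at h1
    linarith
  · have hLne := invLimA_nonempty hf hA hAne hAinv
    have h1 := rhoDist_ge_half_infDist ((shiftInv f)^[m] (lift x₀)) A
      {z | z ∈ InvLim f ∧ ∀ i, z i ∈ A} hLne (fun a ha => ha.2 0)
    have h2 := rhoDist_ge_half_infDist ((shiftInv f)^[m] (lift y₀)) A
      {z | z ∈ InvLim f ∧ ∀ i, z i ∈ A} hLne (fun a ha => ha.2 0)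
    rw [hcoord x₀] at h1
    rw [hcoord y₀] at h2
    linarith
end
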